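/- Let q be a prime power, k a positive integer, and D = (d_1, …, d_n) a list of vectors in F_q^k whose span is all of F_q^k. For y ∈ F_q^k \ {0}, the codeword c(y) is minimal in C(D) if and only if dim V(y, D) = k − 1. -/

import Mathlib

/-- Let `D = (d_1, …, d_n)` be a list of vectors spanning `F_q^k` (here an
arbitrary finite field `F`).  For `y ≠ 0`, the codeword `c(y)` is minimal in
`C(D)` (every codeword `c(x)` covered by `c(y)` is a scalar multiple of `c(y)`)
iff `dim V(y, D) = k - 1`, where `V(y, D)` is the span of
`H(y, D) = {d ∈ D : y·d = 0}`. -/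
theorem minimal_iff_finrank_eq
    (F : Type) [Field F] [Fintype F]
    (k n : ℕ) (hk : 0 < k)
    (D : Fin n → (Fin k → F))
    (hspan : Submodule.span F (Set.range D) = ⊤)
    (y : Fin k → F) (hy : y ≠ 0) :
    (∀ x : Fin k → F,
        (∀ i : Fin n, (∑ j, x j * D i j) ≠ 0 → (∑ j, y j * D i j) ≠ 0) →
        ∃ a : F, (fun i : Fin n => ∑ j, x j * D i j)
            = a • (fun i : Fin n => ∑ j, y j * D i j)) ↔
      Module.finrank F
        (Submodule.span F {v : Fin k → F | v ∈ Set.range D ∧ (∑ j, y j * v j) = 0})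
        = k - 1 := by
  classical
  set e := (Pi.basisFun F (Fin k)).toDualEquiv with he
  have he_apply : ∀ z v : Fin k → F, e z v = ∑ j, z j * v j := by
    intro z v
    conv_lhs => rw [← (Pi.basisFun F (Fin k)).sum_repr v]
    simp only [map_sum, map_smul, smul_eq_mul, he, Module.Basis.toDualEquiv_apply,
      Module.Basis.toDual_apply_left, Pi.basisFun_repr]
    exact Finset.sum_congr rfl fun j _ => mul_comm _ _
  set V : Submodule F (Fin k → F) :=
    Submodule.span F {v : Fin k → F | v ∈ Set.range D ∧ (∑ j, y j * v j) = 0} with hV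
  set W : Submodule F (Fin k → F) := V.dualAnnihilator.comap e.toLinearMap with hW
  -- membership characterisation of W
  have hmemW : ∀ x : Fin k → F,
      x ∈ W ↔ ∀ i : Fin n, (∑ j, y j * D i j) = 0 → (∑ j, x j * D i j) = 0 := by
    intro x
    constructor
    · intro hx i hi
      have : D i ∈ V := Submodule.subset_span ⟨⟨i, rfl⟩, hi⟩
      have h2 : e x (D i) = 0 := (Submodule.mem_dualAnnihilator _).1 hx (D i) this
      rwa [he_apply] at h2
    · intro hx
      rw [hW, Submodule.mem_comap, Submodule.mem_dualAnnihilator]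
      intro w hw
      have hle : V ≤ LinearMap.ker (e x) := by
        rw [hV]
        apply Submodule.span_le.2
        rintro v ⟨⟨i, rfl⟩, hv⟩
        simp only [SetLike.mem_coe, LinearMap.mem_ker]
        rw [he_apply]; exact hx i hv
      simpa using hle hw
  have hyW : y ∈ W := (hmemW y).2 fun i hi => hi
  -- injectivity of the code map
  have hinj : ∀ z : Fin k → F, (∀ i : Fin n, (∑ j, z j * D i j) = 0) → z = 0 := by
    intro z hz
    have hle : (⊤ : Submodule F (Fin k → F)) ≤ LinearMap.ker (e z) := by
      rw [← hspan]
      apply Submodule.span_le.2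
      rintro v ⟨i, rfl⟩
      simp only [SetLike.mem_coe, LinearMap.mem_ker]
      rw [he_apply]; exact hz i
    funext j
    have := hle (Submodule.mem_top (x := Pi.single j 1))
    rw [LinearMap.mem_ker, he_apply] at this
    simpa [Pi.single_apply] using this
  -- dimension count : finrank V + finrank W = k
  have hdim : Module.finrank F V + Module.finrank F W = k := by
    have h1 : Module.finrank F W = Module.finrank F V.dualAnnihilator := by
      rw [hW, Submodule.comap_equiv_eq_map_symm]
      exact LinearEquiv.finrank_map_eq _ _
    have h2 : Module.finrank F ((Fin k → F) ⧸ V) = Module.finrank F V.dualAnnihilator :=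
      LinearEquiv.finrank_eq (Subspace.quotEquivAnnihilator V)
    have h3 : Module.finrank F ((Fin k → F) ⧸ V) + Module.finrank F V
        = Module.finrank F (Fin k → F) := Submodule.finrank_quotient_add_finrank V
    have h4 : Module.finrank F (Fin k → F) = k := by simp
    omega
  constructor
  · intro h
    -- show W = span {y}
    have hWle : W ≤ Submodule.span F {y} := by
      intro x hx
      obtain ⟨a, ha⟩ := h x (by
        intro i hxi hyi
        exact hxi ((hmemW x).1 hx i hyi))
      have hz : x - a • y = 0 := by
        apply hinj
        intro i
        have := congrFun ha i
        have : (∑ j, x j * D i j) = a * ∑ j, y j * D i j := this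
        have hsplit : ∑ j, (x - a • y) j * D i j
            = (∑ j, x j * D i j) - a * ∑ j, y j * D i j := by
          rw [Finset.mul_sum, ← Finset.sum_sub_distrib]
          exact Finset.sum_congr rfl fun j _ => by
            simp [sub_mul, mul_assoc]
        rw [hsplit, this, sub_self]
      have : x = a • y := by rwa [sub_eq_zero] at hz
      rw [this]
      exact Submodule.smul_mem _ a (Submodule.mem_span_singleton_self y)
    have hW1 : Module.finrank F W = 1 := by
      have hge : Submodule.span F {y} ≤ W := by
        rw [Submodule.span_le, Set.singleton_subset_iff]; exact hyW
      have := le_antisymm hWle hge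
      rw [this]
      exact finrank_span_singleton hy
    omega
  · intro h
    have hW1 : Module.finrank F W = 1 := by omega
    have hWeq : Submodule.span F {y} = W := by
      apply Submodule.eq_of_le_of_finrank_eq
      · rw [Submodule.span_le, Set.singleton_subset_iff]; exact hyW
      · rw [hW1]; exact finrank_span_singleton hy
    intro x hx
    have hxW : x ∈ W := (hmemW x).2 fun i hi => by
      by_contra hxi
      exact hx i hxi hi
    rw [← hWeq, Submodule.mem_span_singleton] at hxW
    obtain ⟨a, ha⟩ := hxW
    refine ⟨a, funext fun i => ?_⟩
    simp only [Pi.smul_apply, smul_eq_mul, ← ha]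
    rw [Finset.mul_sum]
    exact Finset.sum_congr rfl fun j _ => by simp [mul_assoc]
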